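/- Let p be a prime and let e, r, d be natural numbers with r ≥ 1 and 0 ≤ d < e. Then the number of r-tuples (k₁, …, k_r) with each k_i ∈ {1, 2, …, p^e} such that gcd(p^e, k₁·k₂⋯k_r) = p^d equals (p - 1)^r · H(r, d) · p^{r(e-1) − d}. (Note r(e-1) ≥ d since d ≤ e - 1 ≤ r(e-1).) -/

import Mathlib

open Finset

/-- Count of numbers in `[1, p^e]` with p-adic valuation exactly `a < e`. -/
lemma aux_count (p : ℕ) (hp : p.Prime) (e a : ℕ) (ha : a < e) :
    ((Finset.Icc 1 (p ^ e)).filter (fun k => k.factorization p = a)).card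
      = (p - 1) * p ^ (e - 1 - a) := by
  have hp1 : 1 < p := hp.one_lt
  have h0 : (Finset.Icc 1 (p ^ e)) = Finset.Ioc 0 (p ^ e) := by
    ext x; simp [Nat.lt_iff_add_one_le]
  have hcond : ∀ k ∈ Finset.Icc 1 (p ^ e),
      (k.factorization p = a ↔ (p ^ a ∣ k ∧ ¬ p ^ (a + 1) ∣ k)) := by
    intro k hk
    have hk0 : k ≠ 0 := by
      simp only [Finset.mem_Icc] at hk; omega
    rw [Nat.Prime.pow_dvd_iff_le_factorization hp hk0,
      Nat.Prime.pow_dvd_iff_le_factorization hp hk0]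
    omega
  rw [Finset.filter_congr hcond]
  have hsub : (Finset.Icc 1 (p ^ e)).filter (fun k => p ^ (a + 1) ∣ k)
      ⊆ (Finset.Icc 1 (p ^ e)).filter (fun k => p ^ a ∣ k) := by
    intro k hk
    simp only [Finset.mem_filter] at hk ⊢
    exact ⟨hk.1, dvd_trans (pow_dvd_pow p (Nat.le_succ a)) hk.2⟩
  have hsplit : (Finset.Icc 1 (p ^ e)).filter (fun k => p ^ a ∣ k ∧ ¬ p ^ (a + 1) ∣ k)
      = (Finset.Icc 1 (p ^ e)).filter (fun k => p ^ a ∣ k)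
        \ (Finset.Icc 1 (p ^ e)).filter (fun k => p ^ (a + 1) ∣ k) := by
    ext k
    simp only [Finset.mem_filter, Finset.mem_sdiff]
    tauto
  rw [hsplit, Finset.card_sdiff_of_subset hsub, h0,
    Nat.Ioc_filter_dvd_card_eq_div, Nat.Ioc_filter_dvd_card_eq_div,
    Nat.pow_div (le_of_lt ha) hp.pos, Nat.pow_div (by omega) hp.pos]
  have h1 : e - a = (e - 1 - a) + 1 := by omega
  have h2 : e - (a + 1) = e - 1 - a := by omega
  rw [h1, h2, pow_succ, Nat.mul_comm]
  rw [Nat.mul_comm p (p ^ (e - 1 - a)), ← Nat.mul_sub_one]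
  ring_nf

lemma aux_gcd (p : ℕ) (hp : p.Prime) (e d N : ℕ) (hN : N ≠ 0) (hd : d < e) :
    Nat.gcd (p ^ e) N = p ^ d ↔ N.factorization p = d := by
  have hpe : (p : ℕ) ^ e ≠ 0 := pow_ne_zero _ hp.pos.ne'
  obtain ⟨c, hce, hc⟩ := (Nat.dvd_prime_pow hp).1 (Nat.gcd_dvd_left (p ^ e) N)
  have hfac : (Nat.gcd (p ^ e) N).factorization p
      = min e (N.factorization p) := by
    rw [Nat.factorization_gcd hpe hN]
    simp [Nat.Prime.factorization_pow hp]
  rw [hc] at hfac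
  rw [Nat.Prime.factorization_pow hp] at hfac
  simp only [Finsupp.single_apply, if_pos rfl, if_true] at hfac
  rw [hc]
  constructor
  · intro h
    have := Nat.pow_right_injective hp.two_le h
    omega
  · intro h
    have : c = d := by omega
    rw [this]

lemma aux_pian (r d : ℕ) :
    (Finset.piAntidiag (Finset.univ : Finset (Fin r)) d).card = Nat.multichoose r d := by
  rw [← Finset.map_sym_eq_piAntidiag, Finset.card_map, Finset.sym_univ, Finset.card_univ,
    Sym.card_sym_eq_multichoose, Fintype.card_fin]

theorem stmt_12 (p : ℕ) (hp : p.Prime) (e r d : ℕ) (hr : 0 < r) (hd : d < e) :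
    ((Fintype.piFinset (fun _ : Fin r => Finset.Icc 1 (p ^ e))).filter
          (fun k => Nat.gcd (p ^ e) (∏ i, k i) = p ^ d)).card
      = (p - 1) ^ r * Nat.multichoose r d * p ^ (r * (e - 1) - d) := by
  classical
  have hcond : ∀ k ∈ Fintype.piFinset (fun _ : Fin r => Finset.Icc 1 (p ^ e)),
      (Nat.gcd (p ^ e) (∏ i, k i) = p ^ d ↔ ∑ i, (k i).factorization p = d) := by
    intro k hk
    have hki : ∀ i, k i ≠ 0 := by
      intro i
      have := (Fintype.mem_piFinset.1 hk) i
      simp only [Finset.mem_Icc] at this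
      omega
    have hN : (∏ i, k i) ≠ 0 := Finset.prod_ne_zero_iff.2 (fun i _ => hki i)
    rw [aux_gcd p hp e d _ hN hd, Nat.factorization_prod (fun i _ => hki i)]
    simp [Finsupp.finset_sum_apply]
  rw [Finset.filter_congr hcond]
  rw [Finset.card_eq_sum_card_fiberwise
      (f := fun k => fun i => (k i).factorization p)
      (t := Finset.piAntidiag Finset.univ d)
      (fun k hk => by
        simp only [Finset.mem_coe, Finset.mem_filter] at hk
        rw [Finset.mem_coe, Finset.mem_piAntidiag]
        exact ⟨hk.2, fun i _ => Finset.mem_univ i⟩)]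
  have hfiber : ∀ a ∈ Finset.piAntidiag (Finset.univ : Finset (Fin r)) d,
      (((Fintype.piFinset (fun _ : Fin r => Finset.Icc 1 (p ^ e))).filter
          (fun k => ∑ i, (k i).factorization p = d)).filter
        (fun k => (fun i => (k i).factorization p) = a)).card
      = (p - 1) ^ r * p ^ (r * (e - 1) - d) := by
    intro a ha
    rw [Finset.mem_piAntidiag] at ha
    have hsum : ∑ i, a i = d := ha.1
    have hai : ∀ i, a i < e := by
      intro i
      have : a i ≤ ∑ j, a j := Finset.single_le_sum (fun j _ => Nat.zero_le _) (Finset.mem_univ i)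
      omega
    have hset : ((Fintype.piFinset (fun _ : Fin r => Finset.Icc 1 (p ^ e))).filter
          (fun k => ∑ i, (k i).factorization p = d)).filter
        (fun k => (fun i => (k i).factorization p) = a)
        = Fintype.piFinset (fun i =>
            (Finset.Icc 1 (p ^ e)).filter (fun k => k.factorization p = a i)) := by
      ext k
      simp only [Finset.mem_filter, Fintype.mem_piFinset, funext_iff]
      constructor
      · rintro ⟨⟨h1, _⟩, h3⟩
        exact fun i => ⟨h1 i, h3 i⟩
      · intro h
        refine ⟨⟨fun i => (h i).1, ?_⟩, fun i => (h i).2⟩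
        rw [Finset.sum_congr rfl (fun i _ => (h i).2)]
        exact hsum
    rw [hset, Fintype.card_piFinset]
    rw [Finset.prod_congr rfl (fun i _ => aux_count p hp e (a i) (hai i))]
    rw [Finset.prod_mul_distrib, Finset.prod_const, Finset.card_univ, Fintype.card_fin,
      Finset.prod_pow_eq_pow_sum]
    congr 1
    congr 1
    have : ∀ i : Fin r, (e - 1 - a i) + a i = e - 1 := fun i => by
      have := hai i; omega
    have hsum2 : (∑ i, (e - 1 - a i)) + d = r * (e - 1) := by
      rw [← hsum, ← Finset.sum_add_distrib]
      rw [Finset.sum_congr rfl (fun i _ => this i)]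
      simp [Finset.card_univ, Nat.mul_comm]
    omega
  rw [Finset.sum_congr rfl hfiber, Finset.sum_const, aux_pian, smul_eq_mul]
  ring
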